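/- If m is null-additive, then its variation m̄ is null-additive on A: if A, B ∈ A and m̄(B) = 0, then m̄(A ∪ B) = m̄(A). -/

import Mathlib

open Set ENNReal

variable {T : Type*}

/-- `𝒜` is an algebra of subsets of `T`. -/
def IsSetAlgebra' (𝒜 : Set (Set T)) : Prop :=
  ∅ ∈ 𝒜 ∧ (∀ A ∈ 𝒜, Aᶜ ∈ 𝒜) ∧ ∀ A ∈ 𝒜, ∀ B ∈ 𝒜, A ∪ B ∈ 𝒜

/-- `m` is monotone on `𝒜`. -/
def MonoSF (m : Set T → ℝ) (𝒜 : Set (Set T)) : Prop :=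
  ∀ A ∈ 𝒜, ∀ B ∈ 𝒜, A ⊆ B → m A ≤ m B

/-- `m` is subadditive on `𝒜`. -/
def SubaddSF (m : Set T → ℝ) (𝒜 : Set (Set T)) : Prop :=
  ∀ A ∈ 𝒜, ∀ B ∈ 𝒜, m (A ∪ B) ≤ m A + m B

/-- `m` is null-additive on `𝒜`. -/
def NullAddSF (m : Set T → ℝ) (𝒜 : Set (Set T)) : Prop :=
  ∀ A ∈ 𝒜, ∀ B ∈ 𝒜, m B = 0 → m (A ∪ B) = m A

/-- `m` is finitely additive on `𝒜`. -/
def FinAddSF (m : Set T → ℝ) (𝒜 : Set (Set T)) : Prop :=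
  ∀ A ∈ 𝒜, ∀ B ∈ 𝒜, Disjoint A B → m (A ∪ B) = m A + m B

/-- The variation `m̄` of `m`: supremum of `Σᵢ m(Aᵢ)` over finite pairwise disjoint
families `{Aᵢ} ⊆ 𝒜` with each `Aᵢ ⊆ E`. -/
noncomputable def variationSF (m : Set T → ℝ) (𝒜 : Set (Set T)) (E : Set T) : ℝ≥0∞ :=
  ⨆ F ∈ {F : Finset (Set T) |
      (∀ A ∈ F, A ∈ 𝒜 ∧ A ⊆ E) ∧ (F : Set (Set T)).PairwiseDisjoint id},
    ∑ A ∈ F, ENNReal.ofReal (m A)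

/-- `A` is an atom of `m`. -/
def IsAtomOf (m : Set T → ℝ) (𝒜 : Set (Set T)) (A : Set T) : Prop :=
  A ∈ 𝒜 ∧ 0 < m A ∧ ∀ B ∈ 𝒜, B ⊆ A → m B = 0 ∨ m (A \ B) = 0

/-- If `m` is null-additive, then its variation is null-additive on `𝒜`. -/
theorem variation_nullAdditive_of_nullAdditive (𝒜 : Set (Set T)) (m : Set T → ℝ)
    (halg : IsSetAlgebra' 𝒜) (h0 : m ∅ = 0) (hpos : ∀ A ∈ 𝒜, 0 ≤ m A)
    (hnull : NullAddSF m 𝒜) :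
    ∀ A ∈ 𝒜, ∀ B ∈ 𝒜, variationSF m 𝒜 B = 0 →
      variationSF m 𝒜 (A ∪ B) = variationSF m 𝒜 A := by
  classical
  obtain ⟨hempty, hcompl, hunion⟩ := halg
  have hinter : ∀ C ∈ 𝒜, ∀ D ∈ 𝒜, C ∩ D ∈ 𝒜 := by
    intro C hC D hD
    have : C ∩ D = (Cᶜ ∪ Dᶜ)ᶜ := by simp [Set.compl_union]
    rw [this]; exact hcompl _ (hunion _ (hcompl _ hC) _ (hcompl _ hD))
  have hdiff : ∀ C ∈ 𝒜, ∀ D ∈ 𝒜, C \ D ∈ 𝒜 := by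
    intro C hC D hD
    rw [Set.diff_eq]; exact hinter _ hC _ (hcompl _ hD)
  intro A hA B hB hvB
  -- every set of 𝒜 contained in B has measure 0
  have hmB : ∀ C ∈ 𝒜, C ⊆ B → m C = 0 := by
    intro C hC hCB
    have key : ENNReal.ofReal (m C) ≤ variationSF m 𝒜 B := by
      have hmem : ({C} : Finset (Set T)) ∈ {F : Finset (Set T) |
          (∀ X ∈ F, X ∈ 𝒜 ∧ X ⊆ B) ∧ (F : Set (Set T)).PairwiseDisjoint id} := by
        constructor
        · intro X hX; simp only [Finset.mem_singleton] at hX; subst hX; exact ⟨hC, hCB⟩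
        · simp
      calc ENNReal.ofReal (m C) = ∑ X ∈ ({C} : Finset (Set T)), ENNReal.ofReal (m X) := by simp
        _ ≤ variationSF m 𝒜 B := le_iSup₂_of_le _ hmem le_rfl
    rw [hvB] at key
    have : ENNReal.ofReal (m C) = 0 := le_antisymm key zero_le
    rw [ENNReal.ofReal_eq_zero] at this
    exact le_antisymm this (hpos C hC)
  apply le_antisymm
  · refine iSup₂_le fun F hF => ?_
    obtain ⟨hF1, hF2⟩ := hF
    -- restrict to sets with nonempty part outside B
    have hstep1 : ∑ C ∈ F, ENNReal.ofReal (m C)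
        = ∑ C ∈ F.filter (fun C => (C \ B).Nonempty), ENNReal.ofReal (m C) := by
      refine (Finset.sum_filter_of_ne ?_).symm
      intro C hC hne
      rw [Set.nonempty_iff_ne_empty]
      intro heq
      have hCB : C ⊆ B := by
        rw [Set.diff_eq_empty] at heq; exact heq
      exact hne (by rw [hmB C (hF1 C hC).1 hCB, ENNReal.ofReal_zero])
    -- m C = m (C \ B) for each C in F
    have hmeq : ∀ C ∈ F, m C = m (C \ B) := by
      intro C hC
      obtain ⟨hC𝒜, hCsub⟩ := hF1 C hC
      have h1 : C \ B ∈ 𝒜 := hdiff _ hC𝒜 _ hB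
      have h2 : C ∩ B ∈ 𝒜 := hinter _ hC𝒜 _ hB
      have h3 : m (C ∩ B) = 0 := hmB _ h2 Set.inter_subset_right
      have h4 : (C \ B) ∪ (C ∩ B) = C := Set.diff_union_inter C B
      calc m C = m ((C \ B) ∪ (C ∩ B)) := by rw [h4]
        _ = m (C \ B) := hnull _ h1 _ h2 h3
    set G := F.filter (fun C => (C \ B).Nonempty) with hG
    have hinj : Set.InjOn (fun C => C \ B) (G : Set (Set T)) := by
      intro C hC D hD heq
      simp only [hG, Finset.coe_filter, Set.mem_setOf_eq] at hC hD
      by_contra hne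
      have hdisj : Disjoint C D := hF2 hC.1 hD.1 hne
      obtain ⟨x, hx⟩ := hC.2
      have heq' : C \ B = D \ B := heq
      have hxD : x ∈ D \ B := heq' ▸ hx
      exact absurd (Set.disjoint_left.mp hdisj hx.1 hxD.1) (fun h => h)
    have hstep2 : ∑ C ∈ G, ENNReal.ofReal (m C)
        = ∑ D ∈ G.image (fun C => C \ B), ENNReal.ofReal (m D) := by
      rw [Finset.sum_image (fun x hx y hy => hinj (by exact_mod_cast hx) (by exact_mod_cast hy))]
      refine Finset.sum_congr rfl fun C hC => ?_
      rw [hmeq C (Finset.mem_filter.mp hC).1]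
    have hmem : G.image (fun C => C \ B) ∈ {F : Finset (Set T) |
        (∀ X ∈ F, X ∈ 𝒜 ∧ X ⊆ A) ∧ (F : Set (Set T)).PairwiseDisjoint id} := by
      constructor
      · intro X hX
        obtain ⟨C, hC, rfl⟩ := Finset.mem_image.mp hX
        have hCF := (Finset.mem_filter.mp hC).1
        obtain ⟨hC𝒜, hCsub⟩ := hF1 C hCF
        refine ⟨hdiff _ hC𝒜 _ hB, ?_⟩
        intro x hx
        rcases hCsub hx.1 with h | h
        · exact h
        · exact absurd h hx.2
      · intro X hX Y hY hXY
        simp only [Finset.coe_image, Set.mem_image] at hX hY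
        obtain ⟨C, hC, rfl⟩ := hX
        obtain ⟨D, hD, rfl⟩ := hY
        have hCD : C ≠ D := fun h => hXY (by rw [h])
        have hCF := Finset.mem_coe.mp (by exact_mod_cast (Finset.mem_filter.mp (by exact_mod_cast hC)).1 : C ∈ F)
        have hDF := Finset.mem_coe.mp (by exact_mod_cast (Finset.mem_filter.mp (by exact_mod_cast hD)).1 : D ∈ F)
        have hdisj : Disjoint C D := hF2 hCF hDF hCD
        exact Set.disjoint_of_subset Set.diff_subset Set.diff_subset hdisj
    calc ∑ C ∈ F, ENNReal.ofReal (m C)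
        = ∑ D ∈ G.image (fun C => C \ B), ENNReal.ofReal (m D) := by rw [hstep1, hstep2]
      _ ≤ variationSF m 𝒜 A := le_iSup₂_of_le _ hmem le_rfl
  · refine iSup₂_le fun F hF => ?_
    obtain ⟨hF1, hF2⟩ := hF
    have hmem : F ∈ {F : Finset (Set T) |
        (∀ X ∈ F, X ∈ 𝒜 ∧ X ⊆ A ∪ B) ∧ (F : Set (Set T)).PairwiseDisjoint id} := by
      exact ⟨fun X hX => ⟨(hF1 X hX).1, (hF1 X hX).2.trans Set.subset_union_left⟩, hF2⟩
    exact le_iSup₂_of_le _ hmem le_rfl
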